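/- The relation on W × S^f defined by (u,T) ≤ (v,R) iff T ⊆ R, v⁻¹u ∈ W_R, and v⁻¹u is T-minimal (i.e., of minimal length in its coset v⁻¹u·W_T) is a partial order. -/

import Mathlib

open List Pointwise

namespace SalvettiAux

variable {B W : Type*} [Group W] [DecidableEq W] {M : CoxeterMatrix B} (cs : CoxeterSystem M W)

local prefix:100 "s" => cs.simple
local prefix:100 "π" => cs.wordProd
local prefix:100 "ℓ" => cs.length
local prefix:100 "ris" => cs.rightInvSeq

/-- The basic involution used to count reflection occurrences mod 2. -/
def nu (i : B) : W × ZMod 2 → W × ZMod 2 :=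
  fun p => (s i * p.1 * s i, p.2 + if p.1 = s i then 1 else 0)

theorem nu_involutive (i : B) : Function.Involutive (nu cs i) := by
  rintro ⟨t, z⟩
  simp only [nu]
  have h2 : (s i * t * s i = s i) ↔ (t = s i) := by
    constructor
    · intro h
      have := congrArg (fun x => s i * x * s i) h
      simpa [mul_assoc, cs.simple_mul_simple_cancel_left,
        cs.simple_mul_simple_cancel_right] using this
    · rintro rfl
      simp [cs.simple_mul_simple_cancel_right]
  have h1 : s i * (s i * t * s i) * s i = t := by
    simp [mul_assoc, cs.simple_mul_simple_cancel_left, cs.simple_mul_simple_cancel_right]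
  rw [Prod.ext_iff]
  refine ⟨h1, ?_⟩
  simp only [h2]
  rcases em (t = s i) with h | h <;> simp [h]
  rw [add_assoc]
  norm_num
  decide

/-- The permutation version of `nu`. -/
def etaPerm (i : B) : Equiv.Perm (W × ZMod 2) := (nu_involutive cs i).toPerm

theorem etaPerm_apply (i : B) (t : W) (z : ZMod 2) :
    etaPerm cs i (t, z) = (s i * t * s i, z + if t = s i then 1 else 0) := rfl

theorem etaPerm_listProd (ω : List B) (t : W) (z : ZMod 2) :
    (ω.map (etaPerm cs)).prod (t, z) =
      (π ω * t * (π ω)⁻¹, z + ((ris ω).count t : ZMod 2)) := by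
  induction ω generalizing z with
  | nil => simp
  | cons i ω ih =>
    rw [List.map_cons, List.prod_cons]
    have h0 : (etaPerm cs i * (ω.map (etaPerm cs)).prod) (t, z)
        = etaPerm cs i ((ω.map (etaPerm cs)).prod (t, z)) := rfl
    rw [h0, ih, etaPerm_apply, CoxeterSystem.rightInvSeq]
    have hiff : (π ω * t * (π ω)⁻¹ = s i) ↔ ((π ω)⁻¹ * s i * π ω = t) := by
      constructor
      · intro h; rw [← h]; group
      · intro h; rw [← h]; group
    have hcount : List.count t ((π ω)⁻¹ * s i * π ω :: ris ω)
        = List.count t (ris ω) + (if π ω * t * (π ω)⁻¹ = s i then 1 else 0) := by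
      rw [List.count_cons]
      congr 1
      simp only [hiff, beq_iff_eq]
    rw [Prod.ext_iff]
    constructor
    · show s i * (π ω * t * (π ω)⁻¹) * s i = π (i :: ω) * t * (π (i :: ω))⁻¹
      rw [cs.wordProd_cons, mul_inv_rev, cs.inv_simple]
      group
    · show z + ((ris ω).count t : ZMod 2) + (if π ω * t * (π ω)⁻¹ = s i then 1 else 0)
        = z + _
      rw [hcount]
      push_cast
      ring


open CoxeterSystem (alternatingWord)

theorem alt_drop (i i' : B) : ∀ (m j : ℕ),
    (alternatingWord i i' m).drop j = alternatingWord i i' (m - j) := by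
  intro m
  induction m with
  | zero => intro j; simp [alternatingWord]
  | succ m ih =>
    intro j
    cases j with
    | zero => simp
    | succ j =>
      rw [CoxeterSystem.alternatingWord_succ', List.drop_succ_cons, ih j]
      congr 1
      omega

theorem getD_ris_eq_drop (ω : List B) (j : ℕ) (h : j < ω.length) :
    (ris ω).getD j 1 = (π (ω.drop (j + 1)))⁻¹ * π (ω.drop j) := by
  rw [cs.getD_rightInvSeq]
  have hd : ω.drop j = ω[j] :: ω.drop (j + 1) := List.drop_eq_getElem_cons h
  rw [hd, cs.wordProd_cons]
  rw [List.getElem?_eq_getElem h]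
  simp [mul_assoc]

theorem prod_map_alt {G : Type*} [Monoid G] (f : B → G) (i i' : B) (m : ℕ) :
    ((alternatingWord i i' (2 * m)).map f).prod = (f i * f i') ^ m := by
  induction m with
  | zero => simp [alternatingWord]
  | succ m ih =>
    have h : 2 * (m + 1) = (2 * m + 1) + 1 := by ring
    rw [h, CoxeterSystem.alternatingWord_succ', CoxeterSystem.alternatingWord_succ',
      if_neg (by simp [Nat.even_add_one, Nat.even_mul]),
      if_pos (by simp [Nat.even_mul])]
    rw [List.map_cons, List.map_cons, List.prod_cons, List.prod_cons, ih, pow_succ']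
    rw [mul_assoc]

theorem E_closed (i i' : B) (n : ℕ) :
    (π (alternatingWord i i' n))⁻¹ * π (alternatingWord i i' (n + 1))
      = ((s i * s i') ^ (n / 2))⁻¹ *
          (if Even n then s i' else s i' * s i * s i') * (s i * s i') ^ (n / 2) := by
  rw [cs.prod_alternatingWord_eq_mul_pow, cs.prod_alternatingWord_eq_mul_pow]
  rcases Nat.even_or_odd n with he | ho
  · have h1 : ¬ Even (n + 1) := by simp [Nat.even_add_one, he]
    have h2 : (n + 1) / 2 = n / 2 := by
      have := Nat.even_iff.mp he; omega
    rw [if_pos he, if_neg h1, if_pos he, h2]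
    group
  · have he1 : Even (n + 1) := by simp [Nat.even_add_one, Nat.not_even_iff_odd.mpr ho]
    have h2 : (n + 1) / 2 = n / 2 + 1 := by
      have := Nat.odd_iff.mp ho; omega
    rw [if_neg (Nat.not_even_iff_odd.mpr ho), if_pos he1, if_neg (Nat.not_even_iff_odd.mpr ho),
      h2, pow_succ']
    simp [mul_inv_rev, cs.inv_simple, mul_assoc]


theorem conj_shift {G : Type*} [Group G] (x x' q : G) (r d : ℕ)
    (h : x' * q ^ d = q ^ d * x) :
    (q ^ (d + r))⁻¹ * x' * q ^ (d + r) = (q ^ r)⁻¹ * x * q ^ r := by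
  have h2 : (q ^ d)⁻¹ * x' * q ^ d = x := by
    rw [mul_assoc, h, ← mul_assoc, inv_mul_cancel, one_mul]
  rw [pow_add, mul_inv_rev]
  have h3 : (q ^ r)⁻¹ * (q ^ d)⁻¹ * x' * (q ^ d * q ^ r)
      = (q ^ r)⁻¹ * ((q ^ d)⁻¹ * x' * q ^ d) * q ^ r := by group
  rw [h3, h2]

theorem conj_pow_inv {G : Type*} [Group G] {x q : G} (hx : x * x = 1) (hxq : x * q * x = q⁻¹) :
    ∀ k : ℕ, x * q ^ k * x = (q ^ k)⁻¹ := by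
  intro k
  induction k with
  | zero => simpa using hx
  | succ k ih =>
    have step : x * q ^ (k + 1) * x = (x * q ^ k * x) * (x * q * x) := by
      rw [pow_succ]
      rw [show x * (q ^ k * q) * x = x * q ^ k * ((x * x) * (q * x)) from by rw [hx]; group]
      group
    rw [step, ih, hxq, pow_succ', mul_inv_rev]

theorem E_shift (i i' : B) (n : ℕ) :
    (π (alternatingWord i i' (n + M i i')))⁻¹ * π (alternatingWord i i' (n + M i i' + 1))
      = (π (alternatingWord i i' n))⁻¹ * π (alternatingWord i i' (n + 1)) := by
  have hq : (s i * s i') ^ (M i i') = 1 := cs.simple_mul_simple_pow i i'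
  have hb2 : (s i' : W) * s i' = 1 := cs.simple_mul_simple_self i'
  have ha2 : (s i : W) * s i = 1 := cs.simple_mul_simple_self i
  have hqinv : ((s i : W) * s i')⁻¹ = s i' * s i := by
    rw [mul_inv_rev, cs.inv_simple, cs.inv_simple]
  have hab : (s i' : W) * (s i * s i') * s i' = (s i * s i')⁻¹ := by
    rw [hqinv]
    calc (s i' : W) * (s i * s i') * s i' = s i' * s i * (s i' * s i') := by group
      _ = s i' * s i := by rw [hb2, mul_one]
  have hab2 : (s i : W) * (s i * s i') * s i = (s i * s i')⁻¹ := by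
    rw [hqinv]
    calc (s i : W) * (s i * s i') * s i = (s i * s i) * (s i' * s i) := by group
      _ = s i' * s i := by rw [ha2, one_mul]
  have hbq := conj_pow_inv hb2 hab
  have haq := conj_pow_inv ha2 hab2
  have hbab2 : ((s i' : W) * s i * s i') * (s i' * s i * s i') = 1 := by
    calc ((s i' : W) * s i * s i') * (s i' * s i * s i')
        = s i' * s i * (s i' * s i') * (s i * s i') := by group
      _ = s i' * (s i * s i) * s i' := by rw [hb2, mul_one]; group
      _ = 1 := by rw [ha2, mul_one, hb2]
  have hbabq : ∀ k : ℕ, ((s i' : W) * s i * s i') * (s i * s i') ^ k * (s i' * s i * s i')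
      = ((s i * s i') ^ k)⁻¹ := by
    apply conj_pow_inv hbab2
    calc ((s i' : W) * s i * s i') * (s i * s i') * (s i' * s i * s i')
        = s i' * s i * (s i' * (s i * s i') * s i') * (s i * s i') := by group
      _ = s i' * s i * (s i * s i')⁻¹ * (s i * s i') := by rw [hab]
      _ = s i' * s i := by group
      _ = (s i * s i')⁻¹ := hqinv.symm
  rw [E_closed cs, E_closed cs]
  rcases Nat.even_or_odd (M i i') with ⟨c, hc⟩ | ⟨c, hc⟩
  · -- even case : M i i' = c + c
    have hpar : Even (n + M i i') ↔ Even n := by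
      simp [Nat.even_add, Nat.even_iff.mpr (show (M i i') % 2 = 0 by omega)]
    have hdiv : (n + M i i') / 2 = c + n / 2 := by omega
    rw [hdiv]
    have hx : ∀ x : W, x * x = 1 → x * (s i * s i') ^ c * x = ((s i * s i') ^ c)⁻¹ →
        x * (s i * s i') ^ c = (s i * s i') ^ c * x := by
      intro x hxx hxq
      have hcc : ((s i * s i') ^ c)⁻¹ = (s i * s i') ^ c := by
        rw [inv_eq_iff_mul_eq_one, ← pow_add, show c + c = M i i' by omega, hq]
      have h1 : x * (s i * s i') ^ c * x = (s i * s i') ^ c := by rw [hxq, hcc]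
      calc x * (s i * s i') ^ c = x * (s i * s i') ^ c * (x * x) := by rw [hxx, mul_one]
        _ = (x * (s i * s i') ^ c * x) * x := by group
        _ = (s i * s i') ^ c * x := by rw [h1]
    rcases Nat.even_or_odd n with he | ho
    · rw [if_pos (hpar.mpr he), if_pos he]
      exact conj_shift _ _ _ _ _ (hx _ hb2 (hbq c))
    · rw [if_neg (by simp [hpar, Nat.not_even_iff_odd.mpr ho]),
        if_neg (Nat.not_even_iff_odd.mpr ho)]
      exact conj_shift _ _ _ _ _ (hx _ hbab2 (hbabq c))
  · -- odd case : M i i' = 2 * c + 1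
    have hM : M i i' = 2 * c + 1 := by omega
    have e3 : (s i * s i') * (s i' * s i * s i') = s i' := by
      calc (s i * s i') * (s i' * s i * s i') = s i * (s i' * s i') * (s i * s i') := by group
        _ = (s i * s i) * s i' := by rw [hb2, mul_one]; group
        _ = s i' := by rw [ha2, one_mul]
    have hModd : ¬ Even (M i i') := by rw [Nat.even_iff]; omega
    have hpar : Even (n + M i i') ↔ ¬ Even n := by rw [Nat.even_add]; tauto
    have e1gen : ∀ x : W, x * x = 1 →
        (∀ k : ℕ, x * (s i * s i') ^ k * x = ((s i * s i') ^ k)⁻¹) →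
        ∀ k : ℕ, x * (s i * s i') ^ k = ((s i * s i') ^ k)⁻¹ * x := by
      intro x hxx hxq k
      calc x * (s i * s i') ^ k = x * (s i * s i') ^ k * (x * x) := by rw [hxx, mul_one]
        _ = (x * (s i * s i') ^ k * x) * x := by group
        _ = ((s i * s i') ^ k)⁻¹ * x := by rw [hxq k]
    rcases Nat.even_or_odd n with he | ho
    · have hdiv : (n + M i i') / 2 = c + n / 2 := by
        have := Nat.even_iff.mp he; omega
      rw [hdiv, if_neg (fun hcon => (hpar.mp hcon) he), if_pos he]
      apply conj_shift
      have e2 : ((s i * s i') ^ c)⁻¹ = (s i * s i') ^ c * (s i * s i') := by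
        apply inv_eq_of_mul_eq_one_right
        rw [← pow_succ, ← pow_add, show c + (c + 1) = M i i' by omega, hq]
      calc (s i' * s i * s i') * (s i * s i') ^ c
          = ((s i * s i') ^ c)⁻¹ * (s i' * s i * s i') := e1gen _ hbab2 hbabq c
        _ = ((s i * s i') ^ c * (s i * s i')) * (s i' * s i * s i') := by rw [e2]
        _ = (s i * s i') ^ c * ((s i * s i') * (s i' * s i * s i')) := by group
        _ = (s i * s i') ^ c * s i' := by rw [e3]
    · have hdiv : (n + M i i') / 2 = (c + 1) + n / 2 := by
        have := Nat.odd_iff.mp ho; omega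
      rw [hdiv, if_pos (hpar.mpr (Nat.not_even_iff_odd.mpr ho)),
        if_neg (Nat.not_even_iff_odd.mpr ho)]
      apply conj_shift
      have e2' : ((s i * s i') ^ (c + 1))⁻¹ = (s i * s i') ^ c := by
        apply inv_eq_of_mul_eq_one_right
        rw [← pow_add, show c + 1 + c = M i i' by omega, hq]
      calc s i' * (s i * s i') ^ (c + 1)
          = ((s i * s i') ^ (c + 1))⁻¹ * s i' := e1gen _ hb2 hbq (c + 1)
        _ = (s i * s i') ^ c * s i' := by rw [e2']
        _ = (s i * s i') ^ c * ((s i * s i') * (s i' * s i * s i')) := by rw [e3]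
        _ = (s i * s i') ^ (c + 1) * (s i' * s i * s i') := by rw [pow_succ]; group


theorem take_ris_eq_drop_ris (i i' : B) :
    ((ris (alternatingWord i i' (2 * M i i'))).take (M i i'))
      = ((ris (alternatingWord i i' (2 * M i i'))).drop (M i i')) := by
  have hlen : (alternatingWord i i' (2 * M i i')).length = 2 * M i i' :=
    CoxeterSystem.length_alternatingWord i i' _
  have hrlen : (ris (alternatingWord i i' (2 * M i i'))).length = 2 * M i i' := by
    rw [cs.length_rightInvSeq, hlen]
  apply List.ext_getElem
  · simp [hrlen]; omega
  · intro j h1 h2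
    have hj : j < M i i' := by simp [hrlen] at h1; omega
    rw [List.getElem_take, List.getElem_drop]
    rw [← List.getD_eq_getElem _ 1, ← List.getD_eq_getElem _ 1]
    rw [getD_ris_eq_drop cs _ _ (by omega), getD_ris_eq_drop cs _ _ (by omega)]
    rw [alt_drop, alt_drop, alt_drop, alt_drop]
    have h3 : 2 * M i i' - (j + 1) = (M i i' - j - 1) + M i i' := by omega
    have h4 : 2 * M i i' - j = (M i i' - j - 1) + M i i' + 1 := by omega
    have h5 : 2 * M i i' - (M i i' + j + 1) = M i i' - j - 1 := by omega
    have h6 : 2 * M i i' - (M i i' + j) = (M i i' - j - 1) + 1 := by omega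
    rw [h3, h4, h5, h6]
    exact E_shift cs i i' (M i i' - j - 1)

theorem count_ris_alt_even (i i' : B) (t : W) :
    Even ((ris (alternatingWord i i' (2 * M i i'))).count t) := by
  rw [← List.take_append_drop (M i i') (ris (alternatingWord i i' (2 * M i i'))),
    List.count_append, ← take_ris_eq_drop_ris cs i i']
  exact ⟨_, rfl⟩

theorem isLiftable_etaPerm : M.IsLiftable (etaPerm cs) := by
  intro i i'
  rw [← prod_map_alt (etaPerm cs) i i' (M i i')]
  apply Equiv.ext
  rintro ⟨t, z⟩
  rw [etaPerm_listProd]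
  have hπ : π (alternatingWord i i' (2 * M i i')) = 1 := by
    rw [cs.prod_alternatingWord_eq_mul_pow, if_pos (by simp [Nat.even_mul]),
      show 2 * M i i' / 2 = M i i' by omega, one_mul, cs.simple_mul_simple_pow]
  obtain ⟨k, hk⟩ := count_ris_alt_even cs i i' t
  rw [hπ, hk]
  have hcast : ((k + k : ℕ) : ZMod 2) = 0 := by
    push_cast
    have h2 : (2 : ZMod 2) = 0 := by decide
    rw [show (k : ZMod 2) + k = 2 * k by ring, h2, zero_mul]
  rw [Prod.ext_iff]
  constructor
  · simp
  · simp [hcast]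

/-- The parity representation of the Coxeter group. -/
def parityHom : W →* Equiv.Perm (W × ZMod 2) := cs.lift ⟨etaPerm cs, isLiftable_etaPerm cs⟩

theorem parityHom_wordProd (ω : List B) :
    parityHom cs (π ω) = (ω.map (etaPerm cs)).prod := by
  induction ω with
  | nil => simp [cs.wordProd_nil]
  | cons i ω ih =>
    rw [cs.wordProd_cons, map_mul, ih, List.map_cons, List.prod_cons]
    congr 1
    exact cs.lift_apply_simple (isLiftable_etaPerm cs) i

theorem count_parity (ω ω' : List B) (h : π ω = π ω') (t : W) :
    (((ris ω).count t : ZMod 2)) = ((ris ω').count t : ZMod 2) := by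
  have h1 := etaPerm_listProd cs ω t 0
  have h2 := etaPerm_listProd cs ω' t 0
  rw [← parityHom_wordProd] at h1 h2
  rw [h] at h1
  have key := h1.symm.trans h2
  have := congrArg Prod.snd key
  simpa using this

theorem simple_mem_rightInvSeq {ω : List B} (hred : cs.IsReduced ω) {i : B}
    (h : ℓ (π ω * s i) < ℓ (π ω)) : s i ∈ ris ω := by
  obtain ⟨α, hα_red, hα⟩ := cs.exists_reduced_word' (π ω * s i)
  have hπ : π (α.concat i) = π ω := by
    rw [cs.wordProd_concat, ← hα, mul_assoc, cs.simple_mul_simple_self, mul_one]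
  have hcount := count_parity cs ω (α.concat i) hπ.symm (s i)
  have hα_count : (ris (α.concat i)).count (s i) = (ris α).count (s i) + 1 := by
    rw [cs.rightInvSeq_concat, List.concat_eq_append, List.count_append]
    congr 1
    · have hinj : Function.Injective (MulAut.conj (s i) : W → W) :=
        (MulAut.conj (s i)).injective
      have hfix : (MulAut.conj (s i) : W → W) (s i) = s i := by
        simp [MulAut.conj_apply, cs.simple_mul_simple_cancel_right]
      have hc := List.count_map_of_injective (ris α) (MulAut.conj (s i) : W → W) hinj (s i)
      rw [hfix] at hc
      exact hc
    · simp
  have hα_zero : (ris α).count (s i) = 0 := by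
    rw [List.count_eq_zero]
    intro hmem
    have hinv := cs.isRightInversion_of_mem_rightInvSeq hα_red hmem
    rw [← hα] at hinv
    have := hinv.2
    rw [mul_assoc, cs.simple_mul_simple_self, mul_one] at this
    omega
  by_contra hnot
  rw [List.count_eq_zero.mpr hnot, hα_count, hα_zero] at hcount
  simp at hcount

theorem exchange {ω : List B} (hred : cs.IsReduced ω) {i : B}
    (h : ℓ (π ω * s i) < ℓ (π ω)) :
    ∃ j < ω.length, π ω * s i = π (ω.eraseIdx j) := by
  have hmem := simple_mem_rightInvSeq cs hred h
  obtain ⟨j, hj, hgt⟩ := List.mem_iff_getElem.mp hmem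
  have hjlen : j < ω.length := by
    rw [cs.length_rightInvSeq] at hj; exact hj
  refine ⟨j, hjlen, ?_⟩
  rw [← cs.wordProd_mul_getD_rightInvSeq ω j]
  congr 1
  rw [List.getD_eq_getElem _ 1 hj, hgt]


open Classical in
theorem deletion {ω : List B} (hnr : ¬ cs.IsReduced ω) :
    ∃ ω' : List B, ω'.length + 2 = ω.length ∧ π ω' = π ω ∧ ∀ x ∈ ω', x ∈ ω := by
  have hne : ω ≠ [] := by
    rintro rfl
    exact hnr (by simp [CoxeterSystem.IsReduced])
  have hlen1 : 1 ≤ ω.length := List.length_pos_iff.mpr hne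
  have hex : ∃ k, ¬ cs.IsReduced (ω.take (k + 1)) := by
    refine ⟨ω.length - 1, ?_⟩
    rwa [show ω.length - 1 + 1 = ω.length by omega, List.take_length]
  set k := Nat.find hex with hkdef
  have hk : ¬ cs.IsReduced (ω.take (k + 1)) := Nat.find_spec hex
  have hαred : cs.IsReduced (ω.take k) := by
    rcases Nat.eq_zero_or_pos k with h0 | hpos
    · rw [h0, List.take_zero]
      simp [CoxeterSystem.IsReduced]
    · have := Nat.find_min hex (show k - 1 < k by omega)
      rw [show k - 1 + 1 = k by omega] at this
      exact not_not.mp this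
  have hklen : k < ω.length := by
    have hplen : ¬ cs.IsReduced (ω.take (ω.length - 1 + 1)) := by
      rwa [show ω.length - 1 + 1 = ω.length by omega, List.take_length]
    have hfle : Nat.find hex ≤ ω.length - 1 := Nat.find_le hplen
    omega
  have htake : ω.take (k + 1) = (ω.take k).concat ω[k] := by
    rw [List.take_succ, List.getElem?_eq_getElem hklen]
    simp
  have hαlen : (ω.take k).length = k := by
    rw [List.length_take]; omega
  have hαl : ℓ (π (ω.take k)) = k := by rw [hαred, hαlen]
  have hlt : ℓ (π (ω.take k) * s ω[k]) < ℓ (π (ω.take k)) := by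
    have hne2 : ℓ (π (ω.take (k + 1))) ≠ (k + 1) := by
      intro hcon
      apply hk
      rw [CoxeterSystem.IsReduced, hcon, List.length_take]
      omega
    rw [htake, cs.wordProd_concat] at hne2
    rcases cs.length_mul_simple (π (ω.take k)) ω[k] with hc | hc
    · exact absurd (by rw [hc, hαl]) hne2
    · omega
  obtain ⟨j, hj, heq⟩ := exchange cs hαred hlt
  refine ⟨(ω.take k).eraseIdx j ++ ω.drop (k + 1), ?_, ?_, ?_⟩
  · have he1 := List.length_eraseIdx_add_one hj
    have hd1 : (ω.drop (k + 1)).length = ω.length - (k + 1) := List.length_drop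
    rw [List.length_append]
    omega
  · rw [cs.wordProd_append, ← heq, ← cs.wordProd_concat, ← htake,
      ← cs.wordProd_append, List.take_append_drop]
  · intro x hx
    rcases List.mem_append.mp hx with hx | hx
    · exact List.take_subset k ω ((List.eraseIdx_sublist _ j).subset hx)
    · exact List.drop_subset _ ω hx

theorem exists_word_subset (R : Set B) (w : W)
    (hw : w ∈ Subgroup.closure (cs.simple '' R)) :
    ∃ ω : List B, (∀ x ∈ ω, x ∈ R) ∧ w = π ω := by
  induction hw using Subgroup.closure_induction with
  | mem x hx =>
    obtain ⟨i, hi, rfl⟩ := hx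
    exact ⟨[i], by simpa using hi, by simp⟩
  | one => exact ⟨[], by simp, by simp⟩
  | mul x y _ _ ihx ihy =>
    obtain ⟨ω₁, h₁, rfl⟩ := ihx
    obtain ⟨ω₂, h₂, rfl⟩ := ihy
    exact ⟨ω₁ ++ ω₂, by
      intro a ha
      rcases List.mem_append.mp ha with h | h
      exacts [h₁ a h, h₂ a h], (cs.wordProd_append ω₁ ω₂).symm⟩
  | inv x _ ihx =>
    obtain ⟨ω, h₁, rfl⟩ := ihx
    exact ⟨ω.reverse, by simpa using h₁, (cs.wordProd_reverse ω).symm⟩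

theorem wordProd_mem_closure (R : Set B) (ω : List B) (h : ∀ x ∈ ω, x ∈ R) :
    π ω ∈ Subgroup.closure (cs.simple '' R) := by
  induction ω with
  | nil => simp [cs.wordProd_nil, one_mem]
  | cons i ω ih =>
    rw [cs.wordProd_cons]
    exact mul_mem (Subgroup.subset_closure ⟨i, h i (by simp), rfl⟩)
      (ih fun x hx => h x (by simp [hx]))

theorem exists_rightDescent_subset {R : Set B} :
    ∀ (n : ℕ) (ω : List B), ω.length = n → (∀ x ∈ ω, x ∈ R) → π ω ≠ 1 →
      ∃ x ∈ R, ℓ (π ω * s x) < ℓ (π ω) := by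
  intro n
  induction n using Nat.strong_induction_on with
  | _ n ih =>
    intro ω hlen hsub hne
    by_cases hred : cs.IsReduced ω
    · have hωne : ω ≠ [] := by rintro rfl; exact hne (by simp)
      obtain ⟨α, x, rfl⟩ := ω.eq_nil_or_concat'.resolve_left hωne
      refine ⟨x, hsub x (by simp), ?_⟩
      have hprod : π (α ++ [x]) * s x = π α := by
        rw [cs.wordProd_append, cs.wordProd_singleton, mul_assoc,
          cs.simple_mul_simple_self, mul_one]
      rw [hprod]
      calc ℓ (π α) ≤ α.length := cs.length_wordProd_le _
        _ < (α ++ [x]).length := by simp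
        _ = ℓ (π (α ++ [x])) := hred.symm
    · obtain ⟨ω', hlen', hprod', hsub'⟩ := deletion cs hred
      have := ih ω'.length (by omega) ω' rfl (fun x hx => hsub x (hsub' x hx))
        (by rwa [hprod'])
      rwa [hprod'] at this

theorem length_add_of_min {R : Set B} {d : W}
    (hd : ∀ u ∈ Subgroup.closure (cs.simple '' R), ℓ d ≤ ℓ (d * u)) :
    ∀ (n : ℕ) (r : W), r ∈ Subgroup.closure (cs.simple '' R) → ℓ r = n →
      ℓ (d * r) = ℓ d + ℓ r := by
  intro n
  induction n using Nat.strong_induction_on with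
  | _ n ih =>
    intro r hr hn
    rcases eq_or_ne r 1 with rfl | hne
    · simp
    · obtain ⟨ω, hsub, rfl⟩ := exists_word_subset cs R r hr
      obtain ⟨x, hxR, hlt⟩ := exists_rightDescent_subset cs ω.length ω rfl hsub hne
      set r' := π ω * s x with hr'def
      have hr' : r' ∈ Subgroup.closure (cs.simple '' R) :=
        mul_mem hr (Subgroup.subset_closure ⟨x, hxR, rfl⟩)
      have hrr : π ω = r' * s x := by
        rw [hr'def, mul_assoc, cs.simple_mul_simple_self, mul_one]
      have hlr' : ℓ r' + 1 = ℓ (π ω) := by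
        rcases cs.length_mul_simple (π ω) x with hc | hc
        · rw [← hr'def] at hc; omega
        · rw [← hr'def] at hc; exact hc
      have ihr' : ℓ (d * r') = ℓ d + ℓ r' := ih (ℓ r') (by omega) r' hr' rfl
      rcases cs.length_mul_simple (d * r') x with hc | hc
      · have hlr'' : ℓ (r' * s x) = ℓ r' + 1 := by rw [← hrr]; omega
        rw [hrr, ← mul_assoc, hc, ihr', hlr'']
        omega
      · exfalso
        obtain ⟨δ, hδred, hδ⟩ := cs.exists_reduced_word' d
        obtain ⟨ρ, hρred, hρ⟩ := cs.exists_reduced_word' r'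
        have hcat : π (δ ++ ρ) = d * r' := by rw [cs.wordProd_append, ← hδ, ← hρ]
        have hδlen : δ.length = ℓ d := by rw [← hδred, ← hδ]
        have hρlen : ρ.length = ℓ r' := by rw [← hρred, ← hρ]
        have hcatred : cs.IsReduced (δ ++ ρ) := by
          rw [CoxeterSystem.IsReduced, hcat, List.length_append, hδlen, hρlen, ihr']
        have hlt2 : ℓ (π (δ ++ ρ) * s x) < ℓ (π (δ ++ ρ)) := by
          rw [hcat]
          omega
        obtain ⟨j, hj, heq⟩ := exchange cs hcatred hlt2
        rw [hcat] at heq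
        rcases lt_or_ge j δ.length with hjδ | hjδ
        · rw [List.eraseIdx_append_of_lt_length hjδ, cs.wordProd_append, ← hρ] at heq
          have hval : π (δ.eraseIdx j) = d * (r' * s x * r'⁻¹) := by
            rw [show d * (r' * s x * r'⁻¹) = (d * r' * s x) * r'⁻¹ by group, heq]
            group
          have hmem : r' * s x * r'⁻¹ ∈ Subgroup.closure (cs.simple '' R) :=
            mul_mem (mul_mem hr' (Subgroup.subset_closure ⟨x, hxR, rfl⟩)) (inv_mem hr')
          have h1 : ℓ d ≤ ℓ (π (δ.eraseIdx j)) := by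
            rw [hval]; exact hd _ hmem
          have h2 := cs.length_wordProd_le (δ.eraseIdx j)
          have h3 := List.length_eraseIdx_add_one hjδ
          omega
        · rw [List.eraseIdx_append_of_length_le hjδ, cs.wordProd_append, ← hδ] at heq
          have hval : π ω = π (ρ.eraseIdx (j - δ.length)) := by
            rw [hrr]
            exact mul_left_cancel (a := d) (by rw [← mul_assoc, heq])
          have hjρ : j - δ.length < ρ.length := by
            rw [List.length_append] at hj
            omega
          have h2 := cs.length_wordProd_le (ρ.eraseIdx (j - δ.length))
          rw [← hval] at h2
          have h3 := List.length_eraseIdx_add_one hjρ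
          omega


theorem min_coset_rep_mul {R : Set B} {a : W}
    (ha : ∀ v ∈ a • ((Subgroup.closure (cs.simple '' R) : Subgroup W) : Set W), ℓ a ≤ ℓ v)
    {u : W} (hu : u ∈ Subgroup.closure (cs.simple '' R)) :
    ℓ (a * u) = ℓ a + ℓ u := by
  apply length_add_of_min cs _ (ℓ u) u hu rfl
  intro v hv
  exact ha (a * v) (Set.smul_mem_smul_set hv)

end SalvettiAux

open Pointwise

/-- The relation on `W × S^f` given by `(u,T) ≤ (v,R)` iff `T ⊆ R`, `v⁻¹u ∈ W_R`, and
`v⁻¹u` is of minimal length in its coset `v⁻¹u • W_T` (i.e. `v⁻¹u` is `T`-minimal),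
is a partial order.  Here `S^f` is the set of subsets `T` of the generating set with
`W_T` finite.  This is the poset underlying the Salvetti complex. -/
theorem salvetti_poset_isPartialOrder
    {B W : Type*} [Finite B] [Group W] (M : CoxeterMatrix B) (cs : CoxeterSystem M W) :
    IsPartialOrder
      (W × {T : Set B // ((Subgroup.closure (cs.simple '' T) : Subgroup W) : Set W).Finite})
      (fun p q => (p.2 : Set B) ⊆ (q.2 : Set B) ∧
        q.1⁻¹ * p.1 ∈ Subgroup.closure (cs.simple '' (q.2 : Set B)) ∧
        ∀ v ∈ (q.1⁻¹ * p.1) •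
            ((Subgroup.closure (cs.simple '' (p.2 : Set B)) : Subgroup W) : Set W),
          cs.length (q.1⁻¹ * p.1) ≤ cs.length v) := by
  letI : DecidableEq W := Classical.decEq W
  refine { refl := ?_, trans := ?_, antisymm := ?_ }
  · intro p
    refine ⟨subset_rfl, ?_, ?_⟩
    · rw [inv_mul_cancel]; exact one_mem _
    · intro v _
      rw [inv_mul_cancel, cs.length_one]
      exact Nat.zero_le _
  · rintro ⟨u, T⟩ ⟨v, R⟩ ⟨w, P⟩ ⟨hTR, hb, hbmin⟩ ⟨hRP, ha, hamin⟩
    dsimp only at hTR hb hbmin hRP ha hamin ⊢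
    have key : w⁻¹ * u = (w⁻¹ * v) * (v⁻¹ * u) := by group
    have hmono : Subgroup.closure (cs.simple '' (R : Set B)) ≤
        Subgroup.closure (cs.simple '' (P : Set B)) :=
      Subgroup.closure_mono (Set.image_mono hRP)
    have hmonoT : Subgroup.closure (cs.simple '' (T : Set B)) ≤
        Subgroup.closure (cs.simple '' (R : Set B)) :=
      Subgroup.closure_mono (Set.image_mono hTR)
    refine ⟨hTR.trans hRP, ?_, ?_⟩
    · rw [key]
      exact mul_mem ha (hmono hb)
    · intro x hx
      rw [Set.mem_smul_set] at hx
      obtain ⟨t, ht, rfl⟩ := hx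
      rw [smul_eq_mul, key]
      have htT : t ∈ Subgroup.closure (cs.simple '' (T : Set B)) := ht
      have hbt : (v⁻¹ * u) * t ∈ Subgroup.closure (cs.simple '' (R : Set B)) :=
        mul_mem hb (hmonoT htT)
      have h1 : cs.length ((w⁻¹ * v) * (v⁻¹ * u)) = cs.length (w⁻¹ * v) + cs.length (v⁻¹ * u) :=
        SalvettiAux.min_coset_rep_mul cs hamin hb
      have h2 : cs.length ((w⁻¹ * v) * ((v⁻¹ * u) * t))
          = cs.length (w⁻¹ * v) + cs.length ((v⁻¹ * u) * t) :=
        SalvettiAux.min_coset_rep_mul cs hamin hbt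
      have h3 : cs.length (v⁻¹ * u) ≤ cs.length ((v⁻¹ * u) * t) :=
        hbmin _ (Set.smul_mem_smul_set htT)
      calc cs.length ((w⁻¹ * v) * (v⁻¹ * u)) = cs.length (w⁻¹ * v) + cs.length (v⁻¹ * u) := h1
        _ ≤ cs.length (w⁻¹ * v) + cs.length ((v⁻¹ * u) * t) := by omega
        _ = cs.length ((w⁻¹ * v) * ((v⁻¹ * u) * t)) := h2.symm
        _ = cs.length ((w⁻¹ * v) * (v⁻¹ * u) * t) := by congr 1; group
  · rintro ⟨u, T⟩ ⟨v, R⟩ ⟨hTR, hb, hbmin⟩ ⟨hRT, hb', _⟩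
    dsimp only at hTR hb hbmin hRT hb' ⊢
    have hsets : (T : Set B) = (R : Set B) := subset_antisymm hTR hRT
    have hinv : (v⁻¹ * u)⁻¹ ∈ Subgroup.closure (cs.simple '' (T : Set B)) := by
      rw [mul_inv_rev, inv_inv]
      exact hb'
    have h1 : cs.length (v⁻¹ * u) ≤ cs.length ((v⁻¹ * u) * (v⁻¹ * u)⁻¹) :=
      hbmin _ (Set.smul_mem_smul_set hinv)
    rw [mul_inv_cancel, cs.length_one, Nat.le_zero, cs.length_eq_zero_iff] at h1
    have huv : u = v := by
      have := inv_mul_eq_one.mp h1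
      exact this.symm
    simp only [Prod.mk.injEq]
    exact ⟨huv, Subtype.ext hsets⟩
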